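/- Define f(X, μ) = 3(μ−1)X + 1/X for X > 0 and μ > 1, subject to the constraint |μ−1|√(μ+2) · X ≥ √2. Then f(X, μ) ≥ √6. -/

import Mathlib

/-- If `X > 0`, `μ > 1` and `(μ−1)√(μ+2)·X ≥ √2`, then
`3(μ−1)X + 1/X ≥ √6`. -/
theorem stmt4 (X μ : ℝ) (hX : 0 < X) (hμ : 1 < μ)
    (hcon : Real.sqrt 2 ≤ (μ - 1) * Real.sqrt (μ + 2) * X) :
    Real.sqrt 6 ≤ 3 * (μ - 1) * X + 1 / X := by
  set s2 := Real.sqrt 2 with hs2def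
  set s6 := Real.sqrt 6 with hs6def
  set sm := Real.sqrt (μ + 2) with hsmdef
  have h2 : s2 ^ 2 = 2 := Real.sq_sqrt (by norm_num)
  have h6 : s6 ^ 2 = 6 := Real.sq_sqrt (by norm_num)
  have hm : sm ^ 2 = μ + 2 := Real.sq_sqrt (by linarith)
  have h2p : 0 < s2 := Real.sqrt_pos.2 (by norm_num)
  have h6p : 0 < s6 := Real.sqrt_pos.2 (by norm_num)
  have hmp : 0 < sm := Real.sqrt_pos.2 (by linarith)
  have key : 0 ≤ 3*(μ-1)*X^2 + 1 - s6*X := by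
    rcases le_or_gt μ 4 with hc | hc
    · -- boundary/monotonicity case
      have h66 : s6 ≤ s2 * sm := by
        nlinarith [sq_nonneg (s2*sm - s6), mul_pos h2p hmp]
      have hE : 0 ≤ 3*(μ-1)*X^2 + 1 - s2*sm*X := by
        set y := (μ-1)*sm*X with hy
        have hys : 0 ≤ y - s2 := by linarith
        have hfac : (μ-1)*(μ+2)*(3*(μ-1)*X^2 + 1 - s2*sm*X)
            = 3*y^2 + (μ-1)*(μ+2) - (μ+2)*s2*y := by
          rw [hy]; nlinarith [hm]
        have h1 : 0 ≤ 3*y^2 + (μ-1)*(μ+2) - (μ+2)*s2*y := by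
          nlinarith [sq_nonneg (y - s2), mul_nonneg (mul_nonneg (by linarith : (0:ℝ) ≤ 6 - (μ+2)) hys) h2p.le]
        have hpos : 0 < (μ-1)*(μ+2) := by nlinarith
        nlinarith [hfac, h1, hpos]
      nlinarith [mul_le_mul_of_nonneg_right h66 hX.le]
    · -- AM-GM case
      obtain ⟨r, hr0, hr2⟩ : ∃ r : ℝ, 0 ≤ r ∧ r^2 = 3*(μ-1) :=
        ⟨Real.sqrt (3*(μ-1)), Real.sqrt_nonneg _, Real.sq_sqrt (by linarith)⟩
      have h2r : s6 ≤ 2*r := by nlinarith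
      nlinarith [sq_nonneg (r*X - 1), mul_le_mul_of_nonneg_right h2r hX.le]
  have heq : 3*(μ-1)*X + 1/X - s6 = (3*(μ-1)*X^2 + 1 - s6*X)/X := by
    field_simp
  have := div_nonneg key hX.le
  linarith [heq ▸ this]
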